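/- arXiv:2106.00661 — 4 statements merged into one kernel-verified Lean document; each statement's English description precedes it below -/
import Mathlib

section
/- Let K ⊆ ℝ^n and Λ ⊆ ℝ^m be nonempty convex compact sets, and let L : K × Λ → ℝ be continuous, convex in its first argument for every fixed second argument, and concave in its second argument for every fixed first argument. Let d_1,…,d_K ∈ K and λ_1,…,λ_K ∈ Λ be sequences satisfying the average-regret bounds (1/K)(Σ_{k=1}^K L(d_k, λ_k) − min_{d ∈ K} Σ_{k=1}^K L(d, λ_k)) ≤ ε and (1/K)(max_{λ ∈ Λ} Σ_{k=1}^K L(d_k, λ) − Σ_{k=1}^K L(d_k, λ_k)) ≤ δ. Set d̄ = (1/K) Σ_k d_k, λ̄ = (1/K) Σ_k λ_k, and v = min_{d ∈ K} max_{λ ∈ Λ} L(d, λ). Then min_{d ∈ K} L(d, λ̄) ≥ v − ε − δ and max_{λ ∈ Λ} L(d̄, λ) ≤ v + ε + δ. -/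
open Finset

/-- Theorem 2 of Abernethy–Wang, meta-algorithm guarantee: if the policy
iterates and cost iterates have average regret at most `ε` and `δ` respectively, then the
averaged dual iterate certifies a lower bound `v - ε - δ` and the averaged primal iterate
certifies an upper bound `v + ε + δ` on the minimax value `v`. -/
theorem meta_algorithm_guarantee
    {n m N : ℕ} (hN : 0 < N)
    (K : Set (Fin n → ℝ)) (Λ : Set (Fin m → ℝ))
    (hKne : K.Nonempty) (hKcv : Convex ℝ K) (hKcp : IsCompact K)
    (hΛne : Λ.Nonempty) (hΛcv : Convex ℝ Λ) (hΛcp : IsCompact Λ)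
    (L : (Fin n → ℝ) → (Fin m → ℝ) → ℝ)
    (hLcont : ContinuousOn (fun p : (Fin n → ℝ) × (Fin m → ℝ) => L p.1 p.2) (K ×ˢ Λ))
    (hLconv : ∀ l ∈ Λ, ConvexOn ℝ K fun x => L x l)
    (hLconc : ∀ x ∈ K, ConcaveOn ℝ Λ (L x))
    (d : Fin N → (Fin n → ℝ)) (lam : Fin N → (Fin m → ℝ))
    (hd : ∀ k, d k ∈ K) (hlam : ∀ k, lam k ∈ Λ)
    (ε δ : ℝ)
    (hreg_d : (1 / (N : ℝ)) *
        ((∑ k, L (d k) (lam k)) - sInf ((fun x => ∑ k, L x (lam k)) '' K)) ≤ ε)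
    (hreg_l : (1 / (N : ℝ)) *
        (sSup ((fun l => ∑ k, L (d k) l) '' Λ) - ∑ k, L (d k) (lam k)) ≤ δ) :
    sInf ((fun x => sSup ((fun l => L x l) '' Λ)) '' K) - ε - δ
        ≤ sInf ((fun x => L x ((N : ℝ)⁻¹ • ∑ k, lam k)) '' K) ∧
    sSup ((fun l => L ((N : ℝ)⁻¹ • ∑ k, d k) l) '' Λ)
        ≤ sInf ((fun x => sSup ((fun l => L x l) '' Λ)) '' K) + ε + δ := by
  have hNpos : (0 : ℝ) < (N : ℝ) := by exact_mod_cast hN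
  have hNne : (N : ℝ) ≠ 0 := ne_of_gt hNpos
  -- global bounds on L over K × Λ
  have hcpL : IsCompact ((fun p : (Fin n → ℝ) × (Fin m → ℝ) => L p.1 p.2) '' (K ×ˢ Λ)) :=
    (hKcp.prod hΛcp).image_of_continuousOn hLcont
  obtain ⟨c, hc⟩ := hcpL.bddBelow
  obtain ⟨C, hC⟩ := hcpL.bddAbove
  have hcL : ∀ x ∈ K, ∀ l ∈ Λ, c ≤ L x l := fun x hx l hl =>
    hc ⟨(x, l), ⟨hx, hl⟩, rfl⟩
  have hCL : ∀ x ∈ K, ∀ l ∈ Λ, L x l ≤ C := fun x hx l hl =>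
    hC ⟨(x, l), ⟨hx, hl⟩, rfl⟩
  -- averaged iterates
  set dbar := (N : ℝ)⁻¹ • ∑ k, d k with hdbar_def
  set lbar := (N : ℝ)⁻¹ • ∑ k, lam k with hlbar_def
  have hw0 : ∀ k ∈ (univ : Finset (Fin N)), (0:ℝ) ≤ (N:ℝ)⁻¹ := fun _ _ => by positivity
  have hw1 : ∑ _k ∈ (univ : Finset (Fin N)), (N:ℝ)⁻¹ = 1 := by
    simp [Finset.sum_const, hNne]
  have hdbar : dbar ∈ K := by
    rw [hdbar_def, Finset.smul_sum]
    exact hKcv.sum_mem hw0 hw1 (fun k _ => hd k)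
  have hlbar : lbar ∈ Λ := by
    rw [hlbar_def, Finset.smul_sum]
    exact hΛcv.sum_mem hw0 hw1 (fun k _ => hlam k)
  obtain ⟨x₀, hx₀⟩ := hKne
  obtain ⟨l₀, hl₀⟩ := hΛne
  -- boundedness facts
  have hbA : BddBelow ((fun x => L x lbar) '' K) :=
    ⟨c, fun y ⟨x, hx, hxy⟩ => hxy ▸ hcL x hx lbar hlbar⟩
  have hbB : BddAbove ((fun l => L dbar l) '' Λ) :=
    ⟨C, fun y ⟨l, hl, hly⟩ => hly ▸ hCL dbar hdbar l hl⟩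
  have hbSum : BddBelow ((fun x => ∑ k, L x (lam k)) '' K) :=
    ⟨(N:ℝ) * c, fun y ⟨x, hx, hxy⟩ => by
      rw [← hxy]
      calc (N:ℝ) * c = ∑ _k ∈ (univ : Finset (Fin N)), c := by
            simp [Finset.sum_const, mul_comm]
        _ ≤ ∑ k, L x (lam k) := Finset.sum_le_sum fun k _ => hcL x hx _ (hlam k)⟩
  have hbSumU : BddAbove ((fun l => ∑ k, L (d k) l) '' Λ) :=
    ⟨(N:ℝ) * C, fun y ⟨l, hl, hly⟩ => by
      rw [← hly]
      calc ∑ k, L (d k) l ≤ ∑ _k ∈ (univ : Finset (Fin N)), C :=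
            Finset.sum_le_sum fun k _ => hCL _ (hd k) l hl
        _ = (N:ℝ) * C := by simp [Finset.sum_const, mul_comm]⟩
  have hbSup : ∀ x ∈ K, BddAbove ((fun l => L x l) '' Λ) := fun x hx =>
    ⟨C, fun y ⟨l, hl, hly⟩ => hly ▸ hCL x hx l hl⟩
  have hbMM : BddBelow ((fun x => sSup ((fun l => L x l) '' Λ)) '' K) :=
    ⟨c, fun y ⟨x, hx, hxy⟩ => by
      rw [← hxy]
      exact le_trans (hcL x hx l₀ hl₀) (le_csSup (hbSup x hx) ⟨l₀, hl₀, rfl⟩)⟩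
  -- A := sInf (L · lbar '' K), B := sSup (L dbar · '' Λ), v := minimax
  set A := sInf ((fun x => L x lbar) '' K) with hA_def
  set B := sSup ((fun l => L dbar l) '' Λ) with hB_def
  set v := sInf ((fun x => sSup ((fun l => L x l) '' Λ)) '' K) with hv_def
  set S := ∑ k, L (d k) (lam k) with hS_def
  set I := sInf ((fun x => ∑ k, L x (lam k)) '' K) with hI_def
  set U := sSup ((fun l => ∑ k, L (d k) l) '' Λ) with hU_def
  -- (1/N) I ≤ A
  have hIA : (N:ℝ)⁻¹ * I ≤ A := by
    apply le_csInf ⟨_, Set.mem_image_of_mem _ hx₀⟩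
    rintro y ⟨x, hx, rfl⟩
    have hconc : ∑ k ∈ univ, (N:ℝ)⁻¹ * L x (lam k) ≤ L x lbar := by
      have := (hLconc x hx).le_map_sum hw0 hw1 (fun k _ => hlam k)
      simpa [hlbar_def, Finset.smul_sum] using this
    have h1 : I ≤ ∑ k, L x (lam k) := csInf_le hbSum ⟨x, hx, rfl⟩
    calc (N:ℝ)⁻¹ * I ≤ (N:ℝ)⁻¹ * ∑ k, L x (lam k) := by
          exact mul_le_mul_of_nonneg_left h1 (by positivity)
      _ = ∑ k ∈ univ, (N:ℝ)⁻¹ * L x (lam k) := by rw [Finset.mul_sum]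
      _ ≤ L x lbar := hconc
  -- B ≤ (1/N) U
  have hBU : B ≤ (N:ℝ)⁻¹ * U := by
    apply csSup_le ⟨_, Set.mem_image_of_mem _ hl₀⟩
    rintro y ⟨l, hl, rfl⟩
    have hconv : L dbar l ≤ ∑ k ∈ univ, (N:ℝ)⁻¹ * L (d k) l := by
      have := (hLconv l hl).map_sum_le hw0 hw1 (fun k _ => hd k)
      simpa [hdbar_def, Finset.smul_sum] using this
    have h1 : ∑ k, L (d k) l ≤ U := le_csSup hbSumU ⟨l, hl, rfl⟩
    calc L dbar l ≤ ∑ k ∈ univ, (N:ℝ)⁻¹ * L (d k) l := hconv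
      _ = (N:ℝ)⁻¹ * ∑ k, L (d k) l := by rw [Finset.mul_sum]
      _ ≤ (N:ℝ)⁻¹ * U := mul_le_mul_of_nonneg_left h1 (by positivity)
  -- regret rearrangements
  have hSI : (N:ℝ)⁻¹ * S ≤ (N:ℝ)⁻¹ * I + ε := by
    have := hreg_d
    rw [one_div] at this
    nlinarith [this]
  have hUS : (N:ℝ)⁻¹ * U ≤ (N:ℝ)⁻¹ * S + δ := by
    have := hreg_l
    rw [one_div] at this
    nlinarith [this]
  have hBA : B ≤ A + ε + δ := by linarith
  -- v ≤ B
  have hvB : v ≤ B := csInf_le hbMM ⟨dbar, hdbar, rfl⟩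
  -- A ≤ v
  have hAv : A ≤ v := by
    apply le_csInf ⟨_, Set.mem_image_of_mem _ hx₀⟩
    rintro y ⟨x, hx, rfl⟩
    calc A ≤ L x lbar := csInf_le hbA ⟨x, hx, rfl⟩
      _ ≤ sSup ((fun l => L x l) '' Λ) := le_csSup (hbSup x hx) ⟨lbar, hlbar, rfl⟩
  exact ⟨by linarith, by linarith⟩
end

section
/- Let K ⊆ ℝ^n and Λ ⊆ ℝ^n be nonempty convex compact sets, let g : Λ → ℝ be continuous and convex, define L(d, λ) = ⟨λ, d⟩ − g(λ), and let f : ℝ^n → ℝ be a function satisfying f(d) = max_{λ ∈ Λ} L(d, λ) for every d ∈ K. If sequences d_1,…,d_K ∈ K and λ_1,…,λ_K ∈ Λ satisfy the average-regret bounds (1/K)(Σ_{k=1}^K L(d_k, λ_k) − min_{d ∈ K} Σ_{k=1}^K L(d, λ_k)) ≤ ε and (1/K)(max_{λ ∈ Λ} Σ_{k=1}^K L(d_k, λ) − Σ_{k=1}^K L(d_k, λ_k)) ≤ δ, then the average iterate d̄ = (1/K) Σ_k d_k satisfies f(d̄) − min_{d ∈ K} f(d) ≤ ε + δ. -/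
open Finset

/-- For the Fenchel-game Lagrangian `L(d,λ) = ⟨λ,d⟩ - g(λ)` with
`f(d) = max_{λ∈Λ} L(d,λ)` on `K`, average regret bounds `ε` (policy player) and
`δ` (cost player) imply that the averaged iterate is `(ε+δ)`-optimal for `f` on `K`. -/
theorem averaged_iterate_suboptimality
    {n N : ℕ} (hN : 0 < N)
    (K Λ : Set (Fin n → ℝ))
    (hKne : K.Nonempty) (hKcv : Convex ℝ K) (hKcp : IsCompact K)
    (hΛne : Λ.Nonempty) (hΛcv : Convex ℝ Λ) (hΛcp : IsCompact Λ)
    (g : (Fin n → ℝ) → ℝ) (hgcont : ContinuousOn g Λ) (hgconv : ConvexOn ℝ Λ g)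
    (L : (Fin n → ℝ) → (Fin n → ℝ) → ℝ)
    (hL : L = fun x l => (∑ i, l i * x i) - g l)
    (f : (Fin n → ℝ) → ℝ)
    (hf : ∀ x ∈ K, f x = sSup ((fun l => L x l) '' Λ))
    (d lam : Fin N → (Fin n → ℝ))
    (hd : ∀ k, d k ∈ K) (hlam : ∀ k, lam k ∈ Λ)
    (ε δ : ℝ)
    (hreg_d : (1 / (N : ℝ)) *
        ((∑ k, L (d k) (lam k)) - sInf ((fun x => ∑ k, L x (lam k)) '' K)) ≤ ε)
    (hreg_l : (1 / (N : ℝ)) *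
        (sSup ((fun l => ∑ k, L (d k) l) '' Λ) - ∑ k, L (d k) (lam k)) ≤ δ) :
    f ((N : ℝ)⁻¹ • ∑ k, d k) - sInf (f '' K) ≤ ε + δ := by
  have hNr0 : (0:ℝ) < (N:ℝ) := by exact_mod_cast hN
  have hNne : (N:ℝ) ≠ 0 := ne_of_gt hNr0
  set dbar : Fin n → ℝ := (N : ℝ)⁻¹ • ∑ k, d k with hdbar
  -- dbar ∈ K
  have hdbarK : dbar ∈ K := by
    have h1 : dbar = ∑ k : Fin N, ((N:ℝ)⁻¹) • d k := by
      rw [hdbar, Finset.smul_sum]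
    rw [h1]
    refine hKcv.sum_mem (fun k _ => by positivity) ?_ (fun k _ => hd k)
    simp [Finset.card_univ, nsmul_eq_mul]
    field_simp
  -- key linearity: ∑ k L(d k, l) = N * L(dbar, l)
  have hsum : ∀ l : Fin n → ℝ, (∑ k, L (d k) l) = (N:ℝ) * L dbar l := by
    intro l
    subst hL
    simp only
    rw [Finset.sum_sub_distrib, Finset.sum_const, Finset.card_univ, Fintype.card_fin,
      nsmul_eq_mul, mul_sub]
    congr 1
    have hdb : ∀ i, dbar i = (N:ℝ)⁻¹ * ∑ k, d k i := by
      intro i; simp [hdbar, Finset.sum_apply]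
    have h1 : ∀ i, l i * dbar i = (N:ℝ)⁻¹ * ∑ k, l i * d k i := by
      intro i; rw [hdb i, mul_left_comm, Finset.mul_sum]
    have h2 : ∑ i, l i * dbar i = (N:ℝ)⁻¹ * ∑ i, ∑ k, l i * d k i := by
      simp only [h1]; rw [← Finset.mul_sum]
    rw [h2, Finset.sum_comm, ← mul_assoc, mul_inv_cancel₀ hNne, one_mul]
  -- continuity of L x in l, on Λ
  have hLcontl : ∀ x : Fin n → ℝ, ContinuousOn (fun l => L x l) Λ := by
    intro x
    subst hL
    exact (continuous_finset_sum _ fun i _ =>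
      (continuous_apply i).mul continuous_const).continuousOn.sub hgcont
  have hbdd : ∀ x : Fin n → ℝ, BddAbove ((fun l => L x l) '' Λ) := fun x =>
    (hΛcp.image_of_continuousOn (hLcontl x)).bddAbove
  -- maximizer λ* of φ l = ∑ k L (d k) l over Λ
  have hφcont : ContinuousOn (fun l => ∑ k, L (d k) l) Λ :=
    continuousOn_finset_sum _ fun k _ => hLcontl (d k)
  obtain ⟨ls, hlsΛ, hlsmax⟩ := hΛcp.exists_isMaxOn hΛne hφcont
  have hsSupφ : sSup ((fun l => ∑ k, L (d k) l) '' Λ) = ∑ k, L (d k) ls := by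
    refine IsGreatest.csSup_eq ⟨Set.mem_image_of_mem _ hlsΛ, ?_⟩
    rintro y ⟨l, hl, rfl⟩; exact hlsmax hl
  -- sSup of L dbar over Λ equals L dbar ls
  have hfd : f dbar = L dbar ls := by
    rw [hf dbar hdbarK]
    refine IsGreatest.csSup_eq ⟨Set.mem_image_of_mem _ hlsΛ, ?_⟩
    rintro y ⟨l, hl, rfl⟩
    have := hlsmax hl
    simp only [Set.mem_setOf_eq] at this
    have h2 : (N:ℝ) * L dbar l ≤ (N:ℝ) * L dbar ls := by
      rw [← hsum l, ← hsum ls]; exact this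
    exact le_of_mul_le_mul_left h2 hNr0
  -- minimizer of ψ x = ∑ k L x (lam k) over K
  have hψcont : ContinuousOn (fun x => ∑ k, L x (lam k)) K := by
    subst hL
    exact (continuous_finset_sum _ fun k _ =>
      (continuous_finset_sum _ fun i _ =>
        continuous_const.mul (continuous_apply i)).sub continuous_const).continuousOn
  obtain ⟨xs, hxsK, hxsmin⟩ := hKcp.exists_isMinOn hKne hψcont
  have hsInfψ : sInf ((fun x => ∑ k, L x (lam k)) '' K) = ∑ k, L xs (lam k) := by
    refine IsGLB.csInf_eq ⟨?_, ?_⟩ (Set.Nonempty.image _ hKne)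
    · rintro y ⟨x, hx, rfl⟩; exact hxsmin hx
    · intro b hb; exact hb (Set.mem_image_of_mem _ hxsK)
  -- lower bound on sInf (f '' K)
  have hfinf : (N:ℝ)⁻¹ * (∑ k, L xs (lam k)) ≤ sInf (f '' K) := by
    refine le_csInf (Set.Nonempty.image _ hKne) ?_
    rintro y ⟨x, hx, rfl⟩
    have h1 : ∀ k : Fin N, L x (lam k) ≤ f x := by
      intro k
      rw [hf x hx]
      exact le_csSup (hbdd x) (Set.mem_image_of_mem _ (hlam k))
    have h2 : (∑ k, L x (lam k)) ≤ (N:ℝ) * f x := by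
      calc (∑ k, L x (lam k)) ≤ ∑ _k : Fin N, f x := Finset.sum_le_sum fun k _ => h1 k
        _ = (N:ℝ) * f x := by simp [Finset.card_univ, nsmul_eq_mul]
    have h3 : (∑ k, L xs (lam k)) ≤ (N:ℝ) * f x := le_trans (hxsmin hx) h2
    rw [inv_mul_le_iff₀ hNr0]
    exact h3
  -- combine
  have hfd2 : f dbar = (N:ℝ)⁻¹ * (∑ k, L (d k) ls) := by
    rw [hfd, hsum ls]; field_simp
  have key : f dbar - sInf (f '' K) ≤
      (N:ℝ)⁻¹ * ((∑ k, L (d k) ls) - (∑ k, L xs (lam k))) := by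
    rw [hfd2]; nlinarith [hfinf]
  have hsplit : (N:ℝ)⁻¹ * ((∑ k, L (d k) ls) - (∑ k, L xs (lam k))) ≤ ε + δ := by
    have e1 : (1 / (N : ℝ)) *
        ((∑ k, L (d k) (lam k)) - (∑ k, L xs (lam k))) ≤ ε := by
      rwa [hsInfψ] at hreg_d
    have e2 : (1 / (N : ℝ)) *
        ((∑ k, L (d k) ls) - ∑ k, L (d k) (lam k)) ≤ δ := by
      rwa [hsSupφ] at hreg_l
    have : (N:ℝ)⁻¹ * ((∑ k, L (d k) ls) - (∑ k, L xs (lam k))) =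
        (1 / (N : ℝ)) * ((∑ k, L (d k) (lam k)) - (∑ k, L xs (lam k))) +
        (1 / (N : ℝ)) * ((∑ k, L (d k) ls) - ∑ k, L (d k) (lam k)) := by
      field_simp
      ring
    linarith
  linarith
end

section
/- Let K ⊆ ℝ^n and Λ ⊆ ℝ^n be nonempty convex compact sets, let f : ℝ^n → ℝ, suppose f*(λ) := sup_{x ∈ ℝ^n}(⟨λ, x⟩ − f(x)) is finite for every λ ∈ Λ and that f(d) = max_{λ ∈ Λ}(⟨λ, d⟩ − f*(λ)) for every d ∈ K, and that λ ↦ f*(λ) is continuous and convex on Λ. Then min_{d ∈ K} f(d) = min_{d ∈ K} max_{λ ∈ Λ} (⟨λ, d⟩ − f*(λ)) = max_{λ ∈ Λ} min_{d ∈ K} (⟨λ, d⟩ − f*(λ)); in particular the minimax equality (exchange of min and max) holds for the Lagrangian L(d, λ) = ⟨λ, d⟩ − f*(λ). -/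
open Finset

private lemma lin_repr {n : ℕ} (ψ : (Fin n → ℝ) →ₗ[ℝ] ℝ) (x : Fin n → ℝ) :
    ψ x = ∑ i, x i * ψ (fun j => if i = j then 1 else 0) := by
  conv_lhs => rw [pi_eq_sum_univ x]
  rw [map_sum]
  simp [smul_eq_mul]

private lemma ip_comb {n : ℕ} (l x y : Fin n → ℝ) (a b : ℝ) :
    ∑ i, l i * (a • x + b • y) i = a * ∑ i, l i * x i + b * ∑ i, l i * y i := by
  rw [Finset.mul_sum, Finset.mul_sum, ← Finset.sum_add_distrib]
  refine Finset.sum_congr rfl fun i _ => ?_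
  simp [Pi.smul_apply, smul_eq_mul]
  ring

private lemma ip_smul {n : ℕ} (l d : Fin n → ℝ) (t : ℝ) :
    ∑ i, l i * (t • d) i = t * ∑ i, l i * d i := by
  rw [Finset.mul_sum]
  refine Finset.sum_congr rfl fun i _ => ?_
  simp [smul_eq_mul]; ring

private lemma cont_ip_l {n : ℕ} (x : Fin n → ℝ) :
    Continuous fun l : Fin n → ℝ => ∑ i, l i * x i :=
  continuous_finset_sum _ fun i _ => (continuous_apply i).mul continuous_const

private lemma cont_ip_x {n : ℕ} (l : Fin n → ℝ) :
    Continuous fun x : Fin n → ℝ => ∑ i, l i * x i :=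
  continuous_finset_sum _ fun i _ => continuous_const.mul (continuous_apply i)


/-- Minimax equality for the Fenchel-dual Lagrangian. If `f*` (the Fenchel
conjugate of `f`, encoded via `IsLUB`) is finite, continuous and convex on the nonempty
convex compact set `Λ`, and `f(d) = max_{λ∈Λ}(⟨λ,d⟩ - f*(λ))` on the nonempty convex
compact set `K`, then
`min_K f = min_K max_Λ (⟨λ,d⟩ - f*(λ)) = max_Λ min_K (⟨λ,d⟩ - f*(λ))`. -/
theorem fenchel_minimax
    {n : ℕ}
    (K Λ : Set (Fin n → ℝ))
    (hKne : K.Nonempty) (hKcv : Convex ℝ K) (hKcp : IsCompact K)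
    (hΛne : Λ.Nonempty) (hΛcv : Convex ℝ Λ) (hΛcp : IsCompact Λ)
    (f : (Fin n → ℝ) → ℝ)
    (fstar : (Fin n → ℝ) → ℝ)
    (hfstar : ∀ l ∈ Λ,
      IsLUB {y : ℝ | ∃ x : Fin n → ℝ, y = (∑ i, l i * x i) - f x} (fstar l))
    (hfstarcont : ContinuousOn fstar Λ)
    (hfstarconv : ConvexOn ℝ Λ fstar)
    (hf : ∀ x ∈ K, f x = sSup ((fun l => (∑ i, l i * x i) - fstar l) '' Λ)) :
    sInf (f '' K)
      = sInf ((fun x => sSup ((fun l => (∑ i, l i * x i) - fstar l) '' Λ)) '' K) ∧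
    sInf (f '' K)
      = sSup ((fun l => sInf ((fun x => (∑ i, l i * x i) - fstar l) '' K)) '' Λ) := by
  
  classical
  set F : (Fin n → ℝ) → ℝ :=
    fun x => sSup ((fun l => (∑ i, l i * x i) - fstar l) '' Λ) with hFdef
  set h : (Fin n → ℝ) → ℝ :=
    fun l => sInf ((fun x => (∑ i, l i * x i) - fstar l) '' K) with hhdef
  -- basic facts about F
  have hΛbddA : ∀ x : Fin n → ℝ,
      BddAbove ((fun l => (∑ i, l i * x i) - fstar l) '' Λ) := fun x =>
    (hΛcp.image_of_continuousOn (((cont_ip_l x).continuousOn).sub hfstarcont)).bddAbove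
  have hF_ge : ∀ (x : Fin n → ℝ) (l : Fin n → ℝ), l ∈ Λ →
      (∑ i, l i * x i) - fstar l ≤ F x := fun x l hl =>
    le_csSup (hΛbddA x) ⟨l, hl, rfl⟩
  have hF_le : ∀ (x : Fin n → ℝ) (b : ℝ),
      (∀ l ∈ Λ, (∑ i, l i * x i) - fstar l ≤ b) → F x ≤ b := fun x b hb =>
    csSup_le (hΛne.image _) (by rintro y ⟨l, hl, rfl⟩; exact hb l hl)
  have hfF : ∀ x : Fin n → ℝ, F x ≤ f x := by
    intro x
    refine hF_le x _ fun l hl => ?_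
    have := (hfstar l hl).1 ⟨x, rfl⟩
    linarith
  -- c := sInf (F '' K)
  obtain ⟨l₁, hl₁⟩ := id hΛne
  have hKbddB : ∀ l : Fin n → ℝ,
      BddBelow ((fun x => (∑ i, l i * x i) - fstar l) '' K) := fun l =>
    (hKcp.image_of_continuousOn (((cont_ip_x l).continuousOn).sub continuousOn_const)).bddBelow
  have hFKbdd : BddBelow (F '' K) := by
    obtain ⟨μ, hμ⟩ := hKbddB l₁
    refine ⟨μ, ?_⟩
    rintro y ⟨x, hx, rfl⟩
    exact le_trans (hμ ⟨x, hx, rfl⟩) (hF_ge x l₁ hl₁)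
  set c : ℝ := sInf (F '' K) with hcdef
  have hcK : ∀ x ∈ K, c ≤ F x := fun x hx => csInf_le hFKbdd ⟨x, hx, rfl⟩
  -- weak duality
  have hweak : ∀ l ∈ Λ, h l ≤ c := by
    intro l hl
    refine le_csInf (hKne.image _) ?_
    rintro y ⟨x, hx, rfl⟩
    exact le_trans (csInf_le (hKbddB l) ⟨x, hx, rfl⟩) (hF_ge x l hl)
  have hDbdd : BddAbove (h '' Λ) := ⟨c, by rintro y ⟨l, hl, rfl⟩; exact hweak l hl⟩
  set D : ℝ := sSup (h '' Λ) with hDdef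
  have hDc : D ≤ c := csSup_le (hΛne.image _) (by rintro y ⟨l, hl, rfl⟩; exact hweak l hl)
  -- strong duality: ∀ ε > 0, c - ε ≤ D
  have hstrong : ∀ ε : ℝ, 0 < ε → c - ε ≤ D := by
    intro ε hε
    -- the epigraph of F
    set E : Set ((Fin n → ℝ) × ℝ) := {p | F p.1 ≤ p.2} with hEdef
    have hE_eq : E = ⋂ l ∈ Λ, {p : (Fin n → ℝ) × ℝ | (∑ i, l i * p.1 i) - fstar l ≤ p.2} := by
      ext p
      simp only [Set.mem_iInter, Set.mem_setOf_eq, hEdef]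
      constructor
      · intro hp l hl; exact le_trans (hF_ge p.1 l hl) hp
      · intro hp; exact hF_le p.1 p.2 hp
    have hEclosed : IsClosed E := by
      rw [hE_eq]
      exact isClosed_biInter fun l hl =>
        isClosed_le (((cont_ip_x l).comp continuous_fst).sub continuous_const) continuous_snd
    have hEconv : Convex ℝ E := by
      rw [hE_eq]
      refine convex_iInter₂ fun l hl => ?_
      intro p hp q hq a b ha hb hab
      simp only [Set.mem_setOf_eq] at hp hq ⊢
      have hfst : (a • p + b • q).1 = a • p.1 + b • q.1 := rfl
      have hsnd : (a • p + b • q).2 = a * p.2 + b * q.2 := rfl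
      rw [hfst, hsnd, ip_comb]
      have h1 := mul_le_mul_of_nonneg_left hp ha
      have h2 := mul_le_mul_of_nonneg_left hq hb
      have h3 : a * fstar l + b * fstar l = fstar l := by rw [← add_mul, hab, one_mul]
      linarith [h1, h2, h3, mul_sub a (∑ i, l i * p.1 i) (fstar l),
        mul_sub b (∑ i, l i * q.1 i) (fstar l)]
    -- the compact convex set
    set B : Set ((Fin n → ℝ) × ℝ) := (fun x => (x, c - ε)) '' K with hBdef
    have hBcp : IsCompact B := hKcp.image (continuous_id.prodMk continuous_const)
    have hBconv : Convex ℝ B := by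
      rintro p ⟨x, hx, rfl⟩ q ⟨y, hy, rfl⟩ a b ha hb hab
      refine ⟨a • x + b • y, hKcv hx hy ha hb hab, ?_⟩
      have h2 : a * (c - ε) + b * (c - ε) = c - ε := by rw [← add_mul, hab, one_mul]
      exact Prod.ext_iff.mpr ⟨rfl, h2.symm⟩
    have hdisj : Disjoint B E := by
      rw [Set.disjoint_left]
      rintro p ⟨x, hx, rfl⟩ hpE
      change F x ≤ c - ε at hpE
      have := hcK x hx
      linarith
    obtain ⟨φ, u, v, hBlt, huv, hElt⟩ :=
      geometric_hahn_banach_compact_closed hBconv hBcp hEconv hEclosed hdisj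
    -- decompose φ
    set q : ℝ := φ (0, 1) with hqdef
    have hφ : ∀ (x : Fin n → ℝ) (t : ℝ), φ (x, t) = φ (x, 0) + t * q := by
      intro x t
      have hxt : ((x, t) : (Fin n → ℝ) × ℝ) = (x, 0) + t • ((0 : Fin n → ℝ), (1 : ℝ)) := by
        ext <;> simp
      rw [hxt, map_add, map_smul, smul_eq_mul]
    obtain ⟨x₀, hx₀⟩ := id hKne
    -- q > 0
    have hq0 : 0 ≤ q := by
      by_contra hq
      push_neg at hq
      set t : ℝ := max (F x₀) ((v - φ (x₀, 0)) / q) with htdef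
      have h1 : v < φ (x₀, t) := hElt (x₀, t) (show F x₀ ≤ t from le_max_left _ _)
      rw [hφ] at h1
      have h2 : t * q ≤ ((v - φ (x₀, 0)) / q) * q :=
        mul_le_mul_of_nonpos_right (le_max_right _ _) hq.le
      rw [div_mul_cancel₀ _ (ne_of_lt hq)] at h2
      linarith
    have hqne : q ≠ 0 := by
      intro hqz
      have h1 : φ (x₀, c - ε) < u := hBlt _ ⟨x₀, hx₀, rfl⟩
      have h2 : v < φ (x₀, F x₀) := hElt (x₀, F x₀) (show F x₀ ≤ F x₀ from le_rfl)
      rw [hφ, hqz] at h1 h2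
      linarith
    have hq : 0 < q := lt_of_le_of_ne hq0 (Ne.symm hqne)
    -- the dual variable l₀
    set ψ : (Fin n → ℝ) →ₗ[ℝ] ℝ := φ.toLinearMap.comp (LinearMap.inl ℝ _ ℝ) with hψdef
    have hψapp : ∀ x : Fin n → ℝ, ψ x = φ (x, 0) := fun x => rfl
    set l₀ : Fin n → ℝ := fun i => -(ψ (fun j => if i = j then 1 else 0)) / q with hl₀def
    have hipl₀ : ∀ x : Fin n → ℝ, (∑ i, l₀ i * x i) = -φ (x, 0) / q := by
      intro x
      have : (∑ i, l₀ i * x i) = (∑ i, x i * ψ (fun j => if i = j then 1 else 0)) * (-1 / q) := by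
        rw [Finset.sum_mul]
        refine Finset.sum_congr rfl fun i _ => ?_
        rw [hl₀def]
        ring
      rw [this, ← lin_repr, hψapp]
      ring
    -- the two key inequalities
    have hlow : ∀ y : Fin n → ℝ, v / q + (∑ i, l₀ i * y i) < F y := by
      intro y
      have h1 : v < φ (y, F y) := hElt (y, F y) (show F y ≤ F y from le_rfl)
      rw [hφ] at h1
      rw [hipl₀]
      rw [← add_div, div_lt_iff₀ hq]
      linarith
    have hupp : ∀ x ∈ K, c - ε - v / q < ∑ i, l₀ i * x i := by
      intro x hx
      have h1 : φ (x, c - ε) < u := hBlt _ ⟨x, hx, rfl⟩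
      rw [hφ] at h1
      rw [hipl₀, lt_div_iff₀ hq, sub_mul, sub_mul, div_mul_cancel₀ _ hqne]
      linarith
    -- l₀ ∈ Λ
    have hl₀Λ : l₀ ∈ Λ := by
      by_contra hl₀
      obtain ⟨χ, u', hχl₀, hχΛ⟩ :=
        geometric_hahn_banach_point_closed hΛcv hΛcp.isClosed hl₀
      set d : Fin n → ℝ := fun i => -χ.toLinearMap (fun j => if i = j then 1 else 0) with hddef
      have hipd : ∀ l : Fin n → ℝ, (∑ i, l i * d i) = -χ l := by
        intro l
        have : (∑ i, l i * d i) = -(∑ i, l i * χ.toLinearMap (fun j => if i = j then 1 else 0)) := by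
          rw [← Finset.sum_neg_distrib]
          refine Finset.sum_congr rfl fun i _ => ?_
          rw [hddef]
          ring
        rw [this, ← lin_repr χ.toLinearMap l]
        rfl
      have hd₀ : -u' < ∑ i, l₀ i * d i := by rw [hipd]; linarith
      have hdΛ : ∀ l ∈ Λ, (∑ i, l i * d i) < -u' := by
        intro l hl; rw [hipd]; linarith [hχΛ l hl]
      -- bound on fstar
      have hfsbdd : BddBelow (fstar '' Λ) :=
        (hΛcp.image_of_continuousOn hfstarcont).bddBelow
      set Cf : ℝ := sInf (fstar '' Λ) with hCfdef
      have hCf : ∀ l ∈ Λ, Cf ≤ fstar l := fun l hl => csInf_le hfsbdd ⟨l, hl, rfl⟩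
      set δ : ℝ := (∑ i, l₀ i * d i) + u' with hδdef
      have hδpos : 0 < δ := by rw [hδdef]; linarith
      set M : ℝ := -Cf - v / q with hMdef
      set t : ℝ := (|M| + 1) / δ with htdef
      have ht0 : 0 ≤ t := div_nonneg (by positivity) hδpos.le
      have htδ : t * δ = |M| + 1 := div_mul_cancel₀ _ hδpos.ne'
      have hub : F (t • d) ≤ t * (-u') - Cf := by
        refine hF_le _ _ fun l hl => ?_
        rw [ip_smul]
        have h1 : t * (∑ i, l i * d i) ≤ t * (-u') :=
          mul_le_mul_of_nonneg_left (hdΛ l hl).le ht0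
        linarith [hCf l hl]
      have hlb := hlow (t • d)
      rw [ip_smul] at hlb
      have habs : M ≤ |M| := le_abs_self M
      have hmul : t * (∑ i, l₀ i * d i) + t * u' = t * δ := by rw [hδdef]; ring
      have hneg : t * (-u') = -(t * u') := by ring
      clear_value t M δ Cf
      linarith [hlb, hub, htδ, habs, hmul, hneg, hMdef]
    -- fstar l₀ ≤ -(v/q)
    have hfsl₀ : fstar l₀ ≤ -(v / q) := by
      refine (hfstar l₀ hl₀Λ).2 ?_
      rintro y ⟨x, rfl⟩
      have h1 := hlow x
      have h2 := hfF x
      linarith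
    -- h l₀ ≥ c - ε
    have hhl₀ : c - ε ≤ h l₀ := by
      refine le_csInf (hKne.image _) ?_
      rintro y ⟨x, hx, rfl⟩
      have h1 := hupp x hx
      simp only
      linarith
    exact le_trans hhl₀ (le_csSup hDbdd ⟨l₀, hl₀Λ, rfl⟩)
  have hcD : c ≤ D := by
    by_contra hcontra
    push_neg at hcontra
    have := hstrong ((c - D) / 2) (by linarith)
    linarith
  have hcDeq : c = D := le_antisymm hcD hDc
  have himgeq : f '' K = F '' K := Set.image_congr hf
  constructor
  · rw [himgeq]
  · rw [himgeq, ← hcdef, hcDeq]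
end

section
/- Convergence rate of the meta-algorithm with per-round approximate best responses: let K ⊆ ℝ^n and Λ ⊆ ℝ^n be nonempty convex compact sets, g : Λ → ℝ continuous and convex, L(d, λ) = ⟨λ, d⟩ − g(λ), and f : ℝ^n → ℝ with f(d) = max_{λ ∈ Λ} L(d, λ) for all d ∈ K. Suppose for each k = 1,…,K the iterate d_k ∈ K is an ε_k-approximate best response to λ_k ∈ Λ, i.e. L(d_k, λ_k) − min_{d ∈ K} L(d, λ_k) ≤ ε_k with ε_k = 1/√k, and the cost iterates satisfy the average-regret bound (1/K)(max_{λ ∈ Λ} Σ_{k=1}^K L(d_k, λ) − Σ_{k=1}^K L(d_k, λ_k)) ≤ c₀/√K. Then the average iterate d̄ = (1/K) Σ_k d_k satisfies f(d̄) − min_{d ∈ K} f(d) ≤ (2 + c₀)/√K. -/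
open Finset

lemma sum_inv_sqrt_le_aux (N : ℕ) :
    ∑ k ∈ Finset.range N, 1 / Real.sqrt (k + 1) ≤ 2 * Real.sqrt N := by
  induction N with
  | zero => simp
  | succ m ih =>
    rw [Finset.sum_range_succ]
    have h1 : (0:ℝ) ≤ m := by positivity
    have hs : Real.sqrt m * Real.sqrt m = m := Real.mul_self_sqrt h1
    have h2 : (0:ℝ) ≤ (m:ℝ) + 1 := by positivity
    have hs' : Real.sqrt ((m:ℝ)+1) * Real.sqrt ((m:ℝ)+1) = (m:ℝ)+1 :=
      Real.mul_self_sqrt h2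
    have hpos : 0 < Real.sqrt ((m:ℝ)+1) := Real.sqrt_pos.2 (by positivity)
    have key : 1 / Real.sqrt ((m:ℝ) + 1)
        ≤ 2 * Real.sqrt ((m:ℝ)+1) - 2 * Real.sqrt m := by
      rw [div_le_iff₀ hpos]
      nlinarith [sq_nonneg (Real.sqrt ((m:ℝ)+1) - Real.sqrt m),
        Real.sqrt_nonneg (m:ℝ), hpos]
    push_cast
    linarith

/-- Convergence rate of the meta-algorithm with per-round approximate best
responses. With `L(d,λ) = ⟨λ,d⟩ - g(λ)`, `f(d) = max_{λ∈Λ} L(d,λ)` on `K`, per-round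
best-response accuracy `ε_k = 1/√k` (iteration `k ∈ {1,…,N}` is index `k+1` for
`k : Fin N`), and cost-player average regret at most `c₀/√N`, the averaged iterate
satisfies `f(d̄) - min_K f ≤ (2 + c₀)/√N`. -/
theorem meta_algorithm_rate_with_approx_best_response
    {n N : ℕ} (hN : 0 < N)
    (K Λ : Set (Fin n → ℝ))
    (hKne : K.Nonempty) (hKcv : Convex ℝ K) (hKcp : IsCompact K)
    (hΛne : Λ.Nonempty) (hΛcv : Convex ℝ Λ) (hΛcp : IsCompact Λ)
    (g : (Fin n → ℝ) → ℝ) (hgcont : ContinuousOn g Λ) (hgconv : ConvexOn ℝ Λ g)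
    (L : (Fin n → ℝ) → (Fin n → ℝ) → ℝ)
    (hL : L = fun x l => (∑ i, l i * x i) - g l)
    (f : (Fin n → ℝ) → ℝ)
    (hf : ∀ x ∈ K, f x = sSup ((fun l => L x l) '' Λ))
    (d lam : Fin N → (Fin n → ℝ))
    (hd : ∀ k, d k ∈ K) (hlam : ∀ k, lam k ∈ Λ)
    (hbr : ∀ k : Fin N,
      L (d k) (lam k) - sInf ((fun x => L x (lam k)) '' K)
        ≤ 1 / Real.sqrt ((k : ℕ) + 1))
    (c₀ : ℝ)
    (hcost : (1 / (N : ℝ)) *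
        (sSup ((fun l => ∑ k, L (d k) l) '' Λ) - ∑ k, L (d k) (lam k))
        ≤ c₀ / Real.sqrt N) :
    f ((N : ℝ)⁻¹ • ∑ k, d k) - sInf (f '' K) ≤ (2 + c₀) / Real.sqrt N := by
  have hNpos : (0:ℝ) < N := by exact_mod_cast hN
  have hsN : (0:ℝ) < Real.sqrt N := Real.sqrt_pos.2 hNpos
  have hNsq : Real.sqrt N * Real.sqrt N = N := Real.mul_self_sqrt hNpos.le
  -- continuity of L in the second variable, on Λ
  have hLcont : ∀ x, ContinuousOn (fun l => L x l) Λ := by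
    intro x
    rw [hL]
    exact ((continuous_finset_sum _ fun i _ =>
      (continuous_apply i).mul continuous_const).continuousOn).sub hgcont
  -- continuity of L in the first variable (everywhere)
  have hLxcont : ∀ l, Continuous fun x => L x l := by
    intro l
    rw [hL]
    exact (continuous_finset_sum _ fun i _ =>
      (continuous_const.mul (continuous_apply i))).sub continuous_const
  have hΛbdd : ∀ x, BddAbove ((fun l => L x l) '' Λ) :=
    fun x => hΛcp.bddAbove_image (hLcont x)
  have hKbdd : ∀ l, BddBelow ((fun x => L x l) '' K) :=
    fun l => hKcp.bddBelow_image (hLxcont l).continuousOn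
  have hSbdd : BddAbove ((fun l => ∑ k, L (d k) l) '' Λ) :=
    hΛcp.bddAbove_image (continuousOn_finset_sum _ fun k _ => hLcont (d k))
  -- the averaged iterate lies in K
  set dbar : Fin n → ℝ := (N : ℝ)⁻¹ • ∑ k, d k with hdbar
  have hdbarK : dbar ∈ K := by
    have := hKcv.sum_mem (t := Finset.univ) (w := fun _ : Fin N => (N:ℝ)⁻¹)
      (fun _ _ => by positivity)
      (by simp [Finset.card_univ]; field_simp)
      (fun k _ => hd k)
    simpa [hdbar, Finset.smul_sum] using this
  -- linearity of L in x
  have hlin : ∀ l, L dbar l = (N:ℝ)⁻¹ * ∑ k, L (d k) l := by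
    intro l
    subst hL
    simp only [hdbar, Pi.smul_apply, Finset.sum_apply, smul_eq_mul]
    have h1 : ∑ k : Fin N, ((∑ i, l i * d k i) - g l)
        = (∑ i, l i * ∑ k : Fin N, d k i) - N * g l := by
      rw [Finset.sum_sub_distrib, Finset.sum_const, Finset.card_univ,
        Fintype.card_fin, nsmul_eq_mul, Finset.sum_comm]
      congr 1
      exact Finset.sum_congr rfl fun i _ => by rw [Finset.mul_sum]
    rw [h1, mul_sub]
    have : (N:ℝ)⁻¹ * ((N:ℝ) * g l) = g l := by field_simp
    rw [this, Finset.mul_sum]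
    congr 1
    exact Finset.sum_congr rfl fun i _ => by ring
  set S : ℝ := sSup ((fun l => ∑ k, L (d k) l) '' Λ) with hS
  -- upper bound on f(dbar)
  have hub : f dbar ≤ (N:ℝ)⁻¹ * S := by
    rw [hf _ hdbarK]
    apply csSup_le (hΛne.image _)
    rintro y ⟨l, hl, rfl⟩
    show L dbar l ≤ (N:ℝ)⁻¹ * S
    rw [hlin l]
    have hle : ∑ k, L (d k) l ≤ S := le_csSup hSbdd ⟨l, hl, rfl⟩
    have : (0:ℝ) ≤ (N:ℝ)⁻¹ := by positivity
    exact mul_le_mul_of_nonneg_left hle this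
  -- lower bound on sInf (f '' K)
  have hlb : (N:ℝ)⁻¹ * ∑ k, sInf ((fun x => L x (lam k)) '' K) ≤ sInf (f '' K) := by
    apply le_csInf (hKne.image f)
    rintro y ⟨x, hx, rfl⟩
    have h1 : ∀ k : Fin N, sInf ((fun x => L x (lam k)) '' K) ≤ L x (lam k) :=
      fun k => csInf_le (hKbdd (lam k)) ⟨x, hx, rfl⟩
    have h2 : ∀ k : Fin N, L x (lam k) ≤ f x := by
      intro k
      rw [hf _ hx]
      exact le_csSup (hΛbdd x) ⟨lam k, hlam k, rfl⟩
    have h3 : ∑ k, sInf ((fun x => L x (lam k)) '' K) ≤ (N:ℝ) * f x := by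
      calc ∑ k, sInf ((fun x => L x (lam k)) '' K) ≤ ∑ k : Fin N, f x :=
            Finset.sum_le_sum fun k _ => (h1 k).trans (h2 k)
        _ = (N:ℝ) * f x := by simp [Finset.sum_const, Finset.card_univ]
    calc (N:ℝ)⁻¹ * ∑ k, sInf ((fun x => L x (lam k)) '' K)
        ≤ (N:ℝ)⁻¹ * ((N:ℝ) * f x) :=
          mul_le_mul_of_nonneg_left h3 (by positivity)
      _ = f x := by field_simp
  -- sum of per-round errors
  have herr : ∑ k : Fin N, (L (d k) (lam k) - sInf ((fun x => L x (lam k)) '' K))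
      ≤ 2 * Real.sqrt N := by
    calc ∑ k : Fin N, (L (d k) (lam k) - sInf ((fun x => L x (lam k)) '' K))
        ≤ ∑ k : Fin N, 1 / Real.sqrt ((k:ℕ) + 1) :=
          Finset.sum_le_sum fun k _ => hbr k
      _ = ∑ k ∈ Finset.range N, 1 / Real.sqrt (k + 1) := by
          rw [Fin.sum_univ_eq_sum_range (fun k => 1 / Real.sqrt (k + 1))]
      _ ≤ 2 * Real.sqrt N := sum_inv_sqrt_le_aux N
  -- combine
  have hsplit : f dbar - sInf (f '' K)
      ≤ (N:ℝ)⁻¹ * (S - ∑ k, L (d k) (lam k))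
        + (N:ℝ)⁻¹ * ∑ k : Fin N,
            (L (d k) (lam k) - sInf ((fun x => L x (lam k)) '' K)) := by
    have : (N:ℝ)⁻¹ * (S - ∑ k, L (d k) (lam k))
        + (N:ℝ)⁻¹ * ∑ k : Fin N,
            (L (d k) (lam k) - sInf ((fun x => L x (lam k)) '' K))
        = (N:ℝ)⁻¹ * S - (N:ℝ)⁻¹ * ∑ k, sInf ((fun x => L x (lam k)) '' K) := by
      rw [Finset.sum_sub_distrib]; ring
    rw [this]
    linarith [hub, hlb]
  have h2sqrt : (N:ℝ)⁻¹ * (2 * Real.sqrt N) = 2 / Real.sqrt N := by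
    rw [eq_div_iff hsN.ne']
    field_simp
    nlinarith [hNsq]
  calc f dbar - sInf (f '' K)
      ≤ (N:ℝ)⁻¹ * (S - ∑ k, L (d k) (lam k))
        + (N:ℝ)⁻¹ * ∑ k : Fin N,
            (L (d k) (lam k) - sInf ((fun x => L x (lam k)) '' K)) := hsplit
    _ ≤ c₀ / Real.sqrt N + 2 / Real.sqrt N := by
        have h1 : (N:ℝ)⁻¹ * (S - ∑ k, L (d k) (lam k)) ≤ c₀ / Real.sqrt N := by
          rw [← one_div]; exact hcost
        have h2 : (N:ℝ)⁻¹ * ∑ k : Fin N,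
            (L (d k) (lam k) - sInf ((fun x => L x (lam k)) '' K))
            ≤ 2 / Real.sqrt N := by
          rw [← h2sqrt]
          exact mul_le_mul_of_nonneg_left herr (by positivity)
        linarith
    _ = (2 + c₀) / Real.sqrt N := by ring
end
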